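/- For every integer k ≥ 1, the polynomial identity x · Σ_{j=1}^{k} C(k-1, j-1) · (-1)^(j-1) · (j-1)! · ⟨k-j-1⟩ = ⟨k-1⟩ holds in ℚ[x], where ⟨n⟩ := ∏_{a=1}^{n}(x-a) for n ≥ 0 and ⟨-1⟩ := 1/x (so the j = k term is x · (-1)^(k-1) (k-1)! · (1/x)). -/

import Mathlib

noncomputable def brkt (m : ℕ) : RatFunc ℚ :=
  ∏ a ∈ Finset.Icc 1 m, (RatFunc.X - (a : RatFunc ℚ))

instance : CharZero (RatFunc ℚ) :=
  charZero_of_injective_algebraMap (RatFunc.algebraMap_injective ℚ)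

noncomputable def gfun : ℕ → RatFunc ℚ
  | 0 => 1
  | (i+1) => RatFunc.X * brkt i

lemma brkt_succ (n : ℕ) : brkt (n+1) = brkt n * (RatFunc.X - ((n+1 : ℕ) : RatFunc ℚ)) := by
  unfold brkt
  rw [Finset.prod_Icc_succ_top (by omega)]

lemma aux (n : ℕ) :
    ∑ i ∈ Finset.range (n+1), (-1:RatFunc ℚ)^(n-i) * ((i.factorial : RatFunc ℚ))⁻¹ * gfun i
      = ((n.factorial : RatFunc ℚ))⁻¹ * brkt n := by
  induction n with
  | zero => simp [gfun, brkt]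
  | succ n ih =>
    rw [Finset.sum_range_succ]
    have h1 : ∑ i ∈ Finset.range (n+1),
        (-1:RatFunc ℚ)^(n+1-i) * ((i.factorial : RatFunc ℚ))⁻¹ * gfun i
        = - (((n.factorial : RatFunc ℚ))⁻¹ * brkt n) := by
      rw [← ih, ← Finset.sum_neg_distrib]
      apply Finset.sum_congr rfl
      intro i hi
      have hi' : i ≤ n := Nat.lt_succ_iff.mp (Finset.mem_range.mp hi)
      have : n + 1 - i = (n - i) + 1 := by omega
      rw [this, pow_succ]
      ring
    rw [h1]
    show _ = ((((n+1).factorial : ℕ) : RatFunc ℚ))⁻¹ * brkt (n+1)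
    rw [brkt_succ]
    simp only [Nat.sub_self, pow_zero, gfun, Nat.factorial_succ]
    have hf : ((n.factorial : RatFunc ℚ)) ≠ 0 := Nat.cast_ne_zero.mpr n.factorial_ne_zero
    have hn : ((n : RatFunc ℚ) + 1) ≠ 0 := by
      have : ((n+1 : ℕ) : RatFunc ℚ) ≠ 0 := Nat.cast_ne_zero.mpr (Nat.succ_ne_zero n)
      push_cast at this; exact this
    push_cast
    field_simp
    ring

theorem stmt13 (k : ℕ) (hk : 1 ≤ k) :
    (RatFunc.X : RatFunc ℚ) *
      ∑ j ∈ Finset.Icc 1 k,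
        ((k - 1).choose (j - 1) : RatFunc ℚ) * (-1) ^ (j - 1) *
          ((j - 1).factorial : RatFunc ℚ) *
          (if j = k then (RatFunc.X : RatFunc ℚ)⁻¹ else brkt (k - j - 1))
    = brkt (k - 1) := by
  obtain ⟨n, rfl⟩ : ∃ n, k = n + 1 := ⟨k - 1, by omega⟩
  simp only [Nat.add_sub_cancel]
  rw [← Finset.Ico_add_one_right_eq_Icc, Finset.sum_Ico_eq_sum_range, Finset.mul_sum]
  simp only [Nat.succ_sub_one, Nat.add_sub_cancel]
  have hstep : ∀ i ∈ Finset.range (n + 1),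
      RatFunc.X * ((n.choose (1 + i - 1) : RatFunc ℚ) * (-1) ^ (1 + i - 1) *
        ((1 + i - 1).factorial : RatFunc ℚ) *
        (if 1 + i = n + 1 then (RatFunc.X : RatFunc ℚ)⁻¹ else brkt (n + 1 - (1 + i) - 1)))
      = (fun i' => (n.factorial : RatFunc ℚ) *
          ((-1:RatFunc ℚ)^(n-i') * ((i'.factorial : RatFunc ℚ))⁻¹ * gfun i')) (n - i) := by
    intro i hi
    have hi' : i ≤ n := Nat.lt_succ_iff.mp (by simpa using hi)
    simp only [Nat.add_sub_cancel_left, show 1 + i - 1 = i by omega]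
    by_cases h : i = n
    · subst h
      rw [if_pos (by omega)]
      simp only [Nat.sub_self, Nat.sub_zero, Nat.choose_self, Nat.cast_one, gfun,
        Nat.factorial_zero, pow_zero, inv_one, mul_one, one_mul]
      have hX : (RatFunc.X : RatFunc ℚ) ≠ 0 := RatFunc.X_ne_zero
      field_simp
    · have hlt : i < n := lt_of_le_of_ne hi' h
      rw [if_neg (by omega)]
      obtain ⟨m, hm⟩ : ∃ m, n - i = m + 1 := ⟨n - i - 1, by omega⟩
      have h3 : n + 1 - (1 + i) - 1 = m := by omega
      have h4 : n - (n - i) = i := by omega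
      rw [h3, h4, hm]
      have hg : gfun (m + 1) = RatFunc.X * brkt m := rfl
      rw [hg]
      have hkey' : (n.choose i : RatFunc ℚ) * (i.factorial : RatFunc ℚ) *
          (((m+1).factorial : ℕ) : RatFunc ℚ) = (n.factorial : RatFunc ℚ) := by
        rw [← hm]
        exact_mod_cast congrArg Nat.cast (Nat.choose_mul_factorial_mul_factorial hi')
      have hne : ((((m+1).factorial : ℕ) : RatFunc ℚ)) ≠ 0 :=
        Nat.cast_ne_zero.mpr (m+1).factorial_ne_zero
      field_simp
      rw [← hkey']
      ring
  rw [Finset.sum_congr rfl hstep]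
  have hrefl := Finset.sum_range_reflect (fun i' => (n.factorial : RatFunc ℚ) *
      ((-1:RatFunc ℚ)^(n-i') * ((i'.factorial : RatFunc ℚ))⁻¹ * gfun i')) (n+1)
  simp only [Nat.add_sub_cancel] at hrefl
  rw [hrefl, ← Finset.mul_sum, aux]
  have hf : ((n.factorial : RatFunc ℚ)) ≠ 0 := Nat.cast_ne_zero.mpr n.factorial_ne_zero
  field_simp
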